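/- Let η ∈ ℂ⟦u,v⟧ be nonzero, let (a,b) be coprime positive integers, set w := (a,b) and μ := w(η). Then for every c ∈ ℂ with c ≠ 0: order(η_c) > μ if and only if Σ_{(p,q) ∈ supp(η), a·p + b·q = μ} (coefficient of η at (p,q))·c^p = 0. Moreover this finite sum equals c^{p₀}·Σ_j c_j·(c^b)^j, where (p₀,q₀) is the point of the face {(p,q) ∈ supp(η) : a·p+b·q = μ} with minimal first coordinate and c_j is the coefficient of η at (p₀+j·b, q₀−j·a); hence the condition is equivalent to c^b being a root of the univariate face polynomial P_{η,ℒ}(z) := Σ_j c_j z^j. (Part (2) of the paper's Proposition 7.15.) -/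

import Mathlib

/-- The coefficient of `η` at the exponent pair `(p, q)`. -/
noncomputable def coeff2 (η : MvPowerSeries (Fin 2) ℂ) (p q : ℕ) : ℂ :=
  MvPowerSeries.coeff (Finsupp.single 0 p + Finsupp.single 1 q) η

/-- The `(a,b)`-weighted order of `η`: the minimum of `a*p + b*q` over the support of `η`. -/
noncomputable def wOrder (a b : ℕ) (η : MvPowerSeries (Fin 2) ℂ) : ℕ :=
  sInf {n : ℕ | ∃ p q : ℕ, coeff2 η p q ≠ 0 ∧ n = a * p + b * q}

/-- The univariate power series `η_c` obtained from `η ∈ ℂ⟦u,v⟧` by the substitution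
`u := c·t^a`, `v := t^b`.  Since `a, b ≥ 1`, the coefficient of `t^N` only involves the
terms of `η` of bidegree `< (N+1, N+1)`, so it may be computed by substituting into the
corresponding truncation of `η`. -/
noncomputable def substBinomial (a b : ℕ) (c : ℂ) (η : MvPowerSeries (Fin 2) ℂ) :
    PowerSeries ℂ :=
  PowerSeries.mk fun N =>
    PowerSeries.coeff N
      (MvPolynomial.aeval
        ![PowerSeries.C c * PowerSeries.X ^ a, PowerSeries.X ^ b]
        (MvPowerSeries.trunc ℂ (Finsupp.single 0 (N + 1) + Finsupp.single 1 (N + 1)) η))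

lemma pair_eq (d : Fin 2 →₀ ℕ) : d = Finsupp.single 0 (d 0) + Finsupp.single 1 (d 1) := by
  ext i
  fin_cases i <;> simp [Finsupp.single_apply]

lemma gpair_apply0 (p q : ℕ) : (Finsupp.single (0 : Fin 2) p + Finsupp.single 1 q : Fin 2 →₀ ℕ) 0 = p := by
  simp
lemma gpair_apply1 (p q : ℕ) : (Finsupp.single (0 : Fin 2) p + Finsupp.single 1 q : Fin 2 →₀ ℕ) 1 = q := by
  simp

lemma coeff_substBinomial (a b : ℕ) (ha : 0 < a) (hb : 0 < b) (c : ℂ)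
    (η : MvPowerSeries (Fin 2) ℂ) (N : ℕ) :
    PowerSeries.coeff N (substBinomial a b c η) =
      ∑ p ∈ Finset.range (N + 1), ∑ q ∈ Finset.range (N + 1),
        if a * p + b * q = N then coeff2 η p q * c ^ p else 0 := by
  classical
  rw [substBinomial, PowerSeries.coeff_mk]
  set T := MvPowerSeries.trunc ℂ (Finsupp.single 0 (N + 1) + Finsupp.single 1 (N + 1)) η with hT
  rw [MvPolynomial.aeval_def, MvPolynomial.eval₂_eq']
  rw [map_sum]
  have hterm : ∀ d : Fin 2 →₀ ℕ,
      PowerSeries.coeff N ((algebraMap ℂ (PowerSeries ℂ)) (T.coeff d) *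
        ∏ i, (![PowerSeries.C c * PowerSeries.X ^ a, PowerSeries.X ^ b]) i ^ d i) =
      (if a * d 0 + b * d 1 = N then T.coeff d * c ^ d 0 else 0) := by
    intro d
    rw [Fin.prod_univ_two]
    simp only [Matrix.cons_val_zero, Matrix.cons_val_one, Matrix.head_cons]
    have : (PowerSeries.C c * PowerSeries.X ^ a) ^ d 0 * (PowerSeries.X ^ b) ^ d 1
        = PowerSeries.C (c ^ d 0) * PowerSeries.X ^ (a * d 0 + b * d 1) := by
      rw [mul_pow, ← pow_mul, ← pow_mul, ← map_pow, mul_assoc, ← pow_add]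
    rw [this]
    have : (algebraMap ℂ (PowerSeries ℂ)) (T.coeff d) = PowerSeries.C (T.coeff d) := rfl
    rw [this, ← mul_assoc, ← map_mul, PowerSeries.coeff_C_mul, PowerSeries.coeff_X_pow]
    by_cases h : a * d 0 + b * d 1 = N
    · rw [if_pos h.symm, if_pos h, mul_one]
    · rw [if_neg (fun hh => h hh.symm), if_neg h, mul_zero]
  rw [Finset.sum_congr rfl fun d _ => hterm d]
  set g : ℕ × ℕ → (Fin 2 →₀ ℕ) := fun pq => Finsupp.single 0 pq.1 + Finsupp.single 1 pq.2
    with hg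
  set U : Finset (Fin 2 →₀ ℕ) :=
    (Finset.range (N + 1) ×ˢ Finset.range (N + 1)).image g with hU
  set f : (Fin 2 →₀ ℕ) → ℂ :=
    fun d => if a * d 0 + b * d 1 = N then T.coeff d * c ^ d 0 else 0 with hf
  have hmemU : ∀ d : Fin 2 →₀ ℕ, d ∈ U ↔ d 0 ≤ N ∧ d 1 ≤ N := by
    intro d
    constructor
    · rintro hd
      simp only [hU, Finset.mem_image, Finset.mem_product, Finset.mem_range] at hd
      obtain ⟨pq, ⟨hp, hq⟩, rfl⟩ := hd
      rw [hg]
      simp only [gpair_apply0, gpair_apply1]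
      omega
    · rintro ⟨h1, h2⟩
      simp only [hU, Finset.mem_image, Finset.mem_product, Finset.mem_range]
      exact ⟨(d 0, d 1), ⟨by omega, by omega⟩, (pair_eq d).symm⟩
  have step1 : ∑ d ∈ T.support, f d = ∑ d ∈ T.support ∪ U, f d := by
    apply Finset.sum_subset Finset.subset_union_left
    intro d _ hd
    rw [hf]
    have : T.coeff d = 0 := by
      by_contra h
      exact hd (MvPolynomial.mem_support_iff.mpr h)
    simp [this]
  have step2 : ∑ d ∈ T.support ∪ U, f d = ∑ d ∈ U, f d := by
    apply (Finset.sum_subset Finset.subset_union_right _).symm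
    intro d _ hd
    rw [hmemU] at hd
    have : ¬ (a * d 0 + b * d 1 = N) := by
      push_neg at hd
      rcases le_or_gt (d 0) N with h1 | h1
      · have h2 := hd h1
        nlinarith
      · nlinarith
    rw [hf]
    simp only [this, if_false]
  rw [step1, step2]
  have hginj : Set.InjOn g ((Finset.range (N + 1) ×ˢ Finset.range (N + 1)) : Finset (ℕ × ℕ)) := by
    intro x _ y _ hxy
    have h0 : (g x) 0 = (g y) 0 := by rw [hxy]
    have h1 : (g x) 1 = (g y) 1 := by rw [hxy]
    rw [hg] at h0 h1
    simp only [gpair_apply0, gpair_apply1] at h0 h1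
    exact Prod.ext h0 h1
  rw [hU, Finset.sum_image hginj, Finset.sum_product]
  apply Finset.sum_congr rfl
  intro p hp
  apply Finset.sum_congr rfl
  intro q hq
  rw [Finset.mem_range] at hp hq
  rw [hf, hg]
  simp only [gpair_apply0, gpair_apply1]
  have hcoeff : T.coeff (Finsupp.single 0 p + Finsupp.single 1 q) = coeff2 η p q := by
    rw [hT, MvPowerSeries.coeff_trunc, if_pos, coeff2]
    rw [lt_iff_le_and_ne]
    constructor
    · rw [Finsupp.le_def]
      intro i
      fin_cases i <;> simp [Finsupp.single_apply] <;> omega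
    · intro h
      have := congrArg (fun φ : Fin 2 →₀ ℕ => φ 0) h
      simp only [gpair_apply0] at this
      omega
  rw [hcoeff]

/-- for `η ≠ 0`, coprime positive `a, b`, `μ = w(η)`, and every `c ≠ 0`:
`order(η_c) > μ` iff the face sum `Σ_{a·p+b·q = μ} c_{p,q}·c^p` vanishes; moreover this sum
equals `c^{p₀} · Σ_j c_j·(c^b)^j` where `(p₀,q₀)` is the face point of minimal first
coordinate and `c_j` is the coefficient of `η` at `(p₀+j·b, q₀−j·a)`; hence the condition
is equivalent to `c^b` being a root of the face polynomial `P(z) = Σ_j c_j z^j`. -/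
theorem order_substBinomial_gt_iff (η : MvPowerSeries (Fin 2) ℂ) (hη : η ≠ 0)
    (a b : ℕ) (ha : 0 < a) (hb : 0 < b) (hab : Nat.Coprime a b) (p₀ q₀ : ℕ)
    (h₀ : coeff2 η p₀ q₀ ≠ 0) (hface : a * p₀ + b * q₀ = wOrder a b η)
    (hmin : ∀ p q : ℕ, coeff2 η p q ≠ 0 → a * p + b * q = wOrder a b η → p₀ ≤ p)
    (c : ℂ) (hc : c ≠ 0) :
    ((wOrder a b η : ℕ∞) < (substBinomial a b c η).order ↔
      (∑ p ∈ Finset.range (wOrder a b η + 1), ∑ q ∈ Finset.range (wOrder a b η + 1),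
        if a * p + b * q = wOrder a b η then coeff2 η p q * c ^ p else 0) = 0) ∧
    (∑ p ∈ Finset.range (wOrder a b η + 1), ∑ q ∈ Finset.range (wOrder a b η + 1),
        if a * p + b * q = wOrder a b η then coeff2 η p q * c ^ p else 0) =
      c ^ p₀ * ∑ j ∈ Finset.range (q₀ / a + 1),
        coeff2 η (p₀ + j * b) (q₀ - j * a) * (c ^ b) ^ j ∧
    ((wOrder a b η : ℕ∞) < (substBinomial a b c η).order ↔
      Polynomial.IsRoot
        (∑ j ∈ Finset.range (q₀ / a + 1),
          Polynomial.C (coeff2 η (p₀ + j * b) (q₀ - j * a)) * Polynomial.X ^ j)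
        (c ^ b)) := by
  classical
  set μ := wOrder a b η with hμ
  have hμle : ∀ p q : ℕ, coeff2 η p q ≠ 0 → μ ≤ a * p + b * q := by
    intro p q h
    exact Nat.sInf_le ⟨p, q, h, rfl⟩
  set S : ℂ := ∑ p ∈ Finset.range (μ + 1), ∑ q ∈ Finset.range (μ + 1),
        if a * p + b * q = μ then coeff2 η p q * c ^ p else 0 with hS
  set Q : ℂ := ∑ j ∈ Finset.range (q₀ / a + 1),
        coeff2 η (p₀ + j * b) (q₀ - j * a) * (c ^ b) ^ j with hQ
  -- coefficient below μ vanish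
  have hbelow : ∀ i : ℕ, i < μ → PowerSeries.coeff i (substBinomial a b c η) = 0 := by
    intro i hi
    rw [coeff_substBinomial a b ha hb]
    apply Finset.sum_eq_zero
    intro p _
    apply Finset.sum_eq_zero
    intro q _
    split_ifs with h
    · by_cases h2 : coeff2 η p q = 0
      · rw [h2, zero_mul]
      · exact absurd (hμle p q h2) (by omega)
    · rfl
  have hcoeffμ : PowerSeries.coeff μ (substBinomial a b c η) = S := by
    rw [coeff_substBinomial a b ha hb]
  -- claim 1
  have claim1 : (μ : ℕ∞) < (substBinomial a b c η).order ↔ S = 0 := by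
    constructor
    · intro h
      rw [← hcoeffμ]
      exact PowerSeries.coeff_of_lt_order μ h
    · intro h
      have h2 : ((μ + 1 : ℕ) : ℕ∞) ≤ (substBinomial a b c η).order := by
        apply PowerSeries.nat_le_order
        intro i hi
        rcases Nat.lt_succ_iff_lt_or_eq.mp hi with h3 | h3
        · exact hbelow i h3
        · rw [h3, hcoeffμ, h]
      refine lt_of_lt_of_le ?_ h2
      exact_mod_cast Nat.lt_succ_self μ
  -- claim 2
  have claim2 : S = c ^ p₀ * Q := by
    rw [hS, ← Finset.sum_product']
    set e : ℕ → ℕ × ℕ := fun j => (p₀ + j * b, q₀ - j * a) with he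
    set E : Finset (ℕ × ℕ) := (Finset.range (q₀ / a + 1)).image e with hE
    have hmemE : ∀ j, j ∈ Finset.range (q₀ / a + 1) → j * a ≤ q₀ := by
      intro j hj
      rw [Finset.mem_range] at hj
      exact (Nat.le_div_iff_mul_le ha).mp (by omega)
    have hkey : ∀ j, j * a ≤ q₀ → a * (p₀ + j * b) + b * (q₀ - j * a) = μ := by
      intro j hja
      rw [← hface]
      zify [hja]
      ring
    have hEsub : E ⊆ Finset.range (μ + 1) ×ˢ Finset.range (μ + 1) := by
      intro pq hpq
      rw [hE, Finset.mem_image] at hpq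
      obtain ⟨j, hj, rfl⟩ := hpq
      have hja := hmemE j hj
      have hk := hkey j hja
      simp only [he, Finset.mem_product, Finset.mem_range]
      constructor
      · have : p₀ + j * b ≤ a * (p₀ + j * b) := Nat.le_mul_of_pos_left _ ha
        omega
      · have : q₀ - j * a ≤ b * (q₀ - j * a) := Nat.le_mul_of_pos_left _ hb
        omega
    have step1 : (∑ pq ∈ Finset.range (μ + 1) ×ˢ Finset.range (μ + 1),
        if a * pq.1 + b * pq.2 = μ then coeff2 η pq.1 pq.2 * c ^ pq.1 else 0) =
        ∑ pq ∈ E, if a * pq.1 + b * pq.2 = μ then coeff2 η pq.1 pq.2 * c ^ pq.1 else 0 := by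
      apply (Finset.sum_subset hEsub _).symm
      rintro ⟨p, q⟩ _ hpq
      dsimp only at hpq ⊢
      split_ifs with hcond
      · by_cases hz : coeff2 η p q = 0
        · rw [hz, zero_mul]
        · exfalso
          have hp0 : p₀ ≤ p := hmin p q hz hcond
          obtain ⟨d, rfl⟩ := Nat.exists_eq_add_of_le hp0
          have hqq : q ≤ q₀ := by
            have h1 : a * p₀ ≤ a * (p₀ + d) := Nat.mul_le_mul_left a (by omega)
            have h2 : b * q ≤ b * q₀ := by omega
            exact Nat.le_of_mul_le_mul_left h2 hb
          obtain ⟨ee, rfl⟩ := Nat.exists_eq_add_of_le hqq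
          have had : a * d = b * ee := by
            have hx : a * p₀ + (b * q + b * ee) = μ := by rw [← hface]; ring
            have hy : (a * p₀ + a * d) + b * q = μ := by rw [← hcond]; ring
            omega
          have hbd : b ∣ d := by
            apply (Nat.Coprime.dvd_of_dvd_mul_left (hab.symm))
            exact ⟨ee, by linarith [had]⟩
          obtain ⟨j, rfl⟩ := hbd
          have hee : ee = a * j := by
            have h3 : b * (a * j) = b * ee := by rw [← had]; ring
            exact (Nat.eq_of_mul_eq_mul_left hb h3).symm
          have h5 : j * a = ee := by rw [hee]; ring
          apply hpq
          rw [hE, Finset.mem_image]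
          refine ⟨j, ?_, ?_⟩
          · rw [Finset.mem_range]
            have h6 : j * a ≤ q + ee := by omega
            have := (Nat.le_div_iff_mul_le ha).mpr h6
            omega
          · rw [he]
            simp only [Prod.mk.injEq]
            constructor
            · ring
            · omega
      · rfl
    rw [step1, hE]
    have heinj : Set.InjOn e ((Finset.range (q₀ / a + 1)) : Finset ℕ) := by
      intro x _ y _ hxy
      have := congrArg Prod.fst hxy
      simp only [he] at this
      have hbne : b ≠ 0 := by omega
      exact Nat.eq_of_mul_eq_mul_right hb (by omega)
    rw [Finset.sum_image heinj]
    rw [hQ, Finset.mul_sum]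
    apply Finset.sum_congr rfl
    intro j hj
    have hja := hmemE j hj
    rw [he]
    simp only
    rw [if_pos (hkey j hja)]
    rw [pow_add, ← pow_mul]
    ring
  refine ⟨claim1, claim2, ?_⟩
  rw [claim1, claim2]
  have heval : Polynomial.eval (c ^ b) (∑ j ∈ Finset.range (q₀ / a + 1),
      Polynomial.C (coeff2 η (p₀ + j * b) (q₀ - j * a)) * Polynomial.X ^ j) = Q := by
    rw [Polynomial.eval_finset_sum]
    simp [hQ]
  rw [Polynomial.IsRoot, heval]
  constructor
  · intro h
    rcases mul_eq_zero.mp h with h | h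
    · exact absurd h (pow_ne_zero _ hc)
    · exact h
  · intro h
    rw [h, mul_zero]
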